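/- There exist a real constant c > 0 and a natural number N such that for all n ≥ N, (4n−2)‼ / (24^n · n!) > n^{c·n}. -/

import Mathlib

open Nat

private lemma two_mul_lt_two_pow : ∀ m : ℕ, 5 ≤ m → 2 * m < 2 ^ m := by
  intro m hm
  induction m with
  | zero => omega
  | succ k ih =>
    rcases Nat.lt_or_ge k 5 with h | h
    · interval_cases k <;> first | omega | norm_num
    · have := ih (by omega)
      rw [pow_succ]
      omega

/-- There are `c > 0` and `N` such that for all `n ≥ N`,
`(4n-2)‼ / (24^n · n!) > n^{cn}`. -/
theorem graph_count_lower_bound :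
    ∃ c : ℝ, 0 < c ∧ ∃ N : ℕ, ∀ n : ℕ, N ≤ n →
      (n : ℝ) ^ (c * n) < ((4 * n - 2)‼ : ℝ) / (24 ^ n * (n ! : ℝ)) := by
  refine ⟨1/2, by norm_num, 144, fun n hn => ?_⟩
  have hn1 : 1 ≤ n := by omega
  have hnR : (144 : ℝ) ≤ (n : ℝ) := by exact_mod_cast hn
  have hn0 : (0 : ℝ) < (n : ℝ) := by linarith
  set s := Real.sqrt (n : ℝ) with hs
  have hs2 : s ^ 2 = (n : ℝ) := Real.sq_sqrt hn0.le
  have hs12 : (12 : ℝ) ≤ s := by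
    have h144 : (12 : ℝ) = Real.sqrt 144 := by
      rw [show (144 : ℝ) = 12 ^ 2 by norm_num, Real.sqrt_sq (by norm_num)]
    rw [h144, hs]
    exact Real.sqrt_le_sqrt hnR
  have hs0 : (0 : ℝ) < s := by linarith
  -- rewrite LHS
  have hL : (n : ℝ) ^ ((1/2 : ℝ) * (n : ℝ)) = s ^ n := by
    rw [Real.rpow_mul hn0.le, Real.rpow_natCast, hs, Real.sqrt_eq_rpow]
  -- double factorial identity
  have hdf : (4 * n - 2)‼ = 2 ^ (2 * n - 1) * (2 * n - 1)! := by
    have h4 : 4 * n - 2 = 2 * (2 * n - 1) := by omega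
    rw [h4, Nat.doubleFactorial_two_mul]
  -- factorial lower bound
  have hfac : n ! * n ^ (n - 1) ≤ (2 * n - 1)! := by
    calc n ! * n ^ (n - 1) ≤ n ! * (n + 1) ^ (n - 1) :=
          Nat.mul_le_mul_left _ (Nat.pow_le_pow_left (by omega) _)
      _ ≤ (n + (n - 1))! := Nat.factorial_mul_pow_le_factorial
      _ = (2 * n - 1)! := by congr 1; omega
  have hpos : (0 : ℝ) < 24 ^ n * (n ! : ℝ) := by positivity
  rw [lt_div_iff₀ hpos, hL]
  -- key inequality: s^n * 24^n < 2^(2n-1) * n^(n-1)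
  have key : s ^ n * 24 ^ n < (2 : ℝ) ^ (2 * n - 1) * (n : ℝ) ^ (n - 1) := by
    have h2n : (2 * n : ℝ) < 2 ^ n := by
      exact_mod_cast two_mul_lt_two_pow n (by omega)
    have h2n0 : (0 : ℝ) < 2 * n := by linarith
    rw [← mul_lt_mul_iff_of_pos_right h2n0]
    have e1 : (2 : ℝ) ^ (2 * n - 1) * (n : ℝ) ^ (n - 1) * (2 * n)
        = 2 ^ (2 * n) * (n : ℝ) ^ n := by
      rw [show (2 : ℝ) ^ (2 * n) = 2 ^ (2 * n - 1) * 2 by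
            rw [← pow_succ]; congr 1; omega,
          show ((n : ℝ)) ^ n = (n : ℝ) ^ (n - 1) * (n : ℝ) by
            rw [← pow_succ]; congr 1; omega]
      ring
    rw [e1]
    have hnn : (n : ℝ) ^ n = (s ^ n) ^ 2 := by
      rw [← hs2, ← pow_mul, ← pow_mul, Nat.mul_comm]
    rw [hnn]
    have h48 : (48 : ℝ) ^ n ≤ 4 ^ n * s ^ n := by
      rw [← mul_pow]
      exact pow_le_pow_left₀ (by norm_num) (by linarith) n
    have hsn0 : (0 : ℝ) < s ^ n := by positivity
    have h24 : (0 : ℝ) < (24 : ℝ) ^ n := by positivity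
    calc s ^ n * 24 ^ n * (2 * n) < s ^ n * 24 ^ n * 2 ^ n := by
          apply mul_lt_mul_of_pos_left h2n (by positivity)
      _ = s ^ n * 48 ^ n := by rw [show (48:ℝ) = 24 * 2 by norm_num, mul_pow]; ring
      _ ≤ s ^ n * (4 ^ n * s ^ n) := by
          exact mul_le_mul_of_nonneg_left h48 hsn0.le
      _ = 2 ^ (2 * n) * (s ^ n) ^ 2 := by
          rw [pow_mul]; ring
  -- combine
  have hfacR : (n ! : ℝ) * (n : ℝ) ^ (n - 1) ≤ ((2 * n - 1)! : ℝ) := by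
    exact_mod_cast hfac
  have hdfR : ((4 * n - 2)‼ : ℝ) = 2 ^ (2 * n - 1) * ((2 * n - 1)! : ℝ) := by
    exact_mod_cast hdf
  rw [hdfR]
  have hfpos : (0 : ℝ) < (n ! : ℝ) := by exact_mod_cast Nat.factorial_pos n
  calc s ^ n * (24 ^ n * (n ! : ℝ))
      = (s ^ n * 24 ^ n) * (n ! : ℝ) := by ring
    _ < ((2 : ℝ) ^ (2 * n - 1) * (n : ℝ) ^ (n - 1)) * (n ! : ℝ) :=
        mul_lt_mul_of_pos_right key hfpos
    _ = (2 : ℝ) ^ (2 * n - 1) * ((n ! : ℝ) * (n : ℝ) ^ (n - 1)) := by ring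
    _ ≤ 2 ^ (2 * n - 1) * ((2 * n - 1)! : ℝ) :=
        mul_le_mul_of_nonneg_left hfacR (by positivity)
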